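/- arXiv:2403.18429 — 3 statements merged into one kernel-verified Lean document; each statement's English description precedes it below -/
import Mathlib

section
/- There exists a finite simple connected graph G with at least two vertices such that μ(G) > max over all pairs of adjacent vertices v_i ~ v_j of G of 2 + (m_i + m_j) − (d_i + d_j) + √(2·(d_i² + d_j²) − 4·(m_i + m_j) + 4). (This disproves conjectured edge-maximum bound 41 of Brankov, Hansen and Stevanović.) -/
noncomputable section

open Finset

/-- The degree of a vertex, as a real number. -/
def degR {V : Type*} [Fintype V] (G : SimpleGraph V) (v : V) : ℝ :=
  letI := Classical.decRel G.Adj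
  (G.degree v : ℝ)

/-- The average degree of the neighbours of a vertex, as a real number:
`m_v = (∑_{u ~ v} d_u) / d_v`. -/
def avgDegR {V : Type*} [Fintype V] (G : SimpleGraph V) (v : V) : ℝ :=
  letI := Classical.decRel G.Adj
  (∑ u ∈ G.neighborFinset v, (G.degree u : ℝ)) / (G.degree v : ℝ)

/-- The largest eigenvalue of the Laplacian matrix `L = D - A` of a finite graph. -/
def lapSpecRad {V : Type*} [Fintype V] [DecidableEq V] [Nonempty V]
    (G : SimpleGraph V) : ℝ :=
  letI := Classical.decRel G.Adj
  ⨆ i, (SimpleGraph.posSemidef_lapMatrix ℝ G).isHermitian.eigenvalues i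

/-- The wheel graph on 12 vertices: hub `0`, rim cycle `1,…,11`. -/
def W : SimpleGraph (Fin 12) where
  Adj i j := i ≠ j ∧ (i = 0 ∨ j = 0 ∨ i.val + 1 = j.val ∨ j.val + 1 = i.val ∨
      (i.val = 11 ∧ j.val = 1) ∨ (j.val = 11 ∧ i.val = 1))
  symm := ⟨by intro i j h; revert h; revert i j; decide⟩
  loopless := ⟨by intro v h; revert h; revert v; decide⟩

instance : DecidableRel W.Adj := fun i j =>
  inferInstanceAs (Decidable (i ≠ j ∧ (i = 0 ∨ j = 0 ∨ i.val + 1 = j.val ∨ j.val + 1 = i.val ∨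
      (i.val = 11 ∧ j.val = 1) ∨ (j.val = 11 ∧ i.val = 1))))

lemma neighborFinset_indep {V : Type*} [Fintype V] [DecidableEq V] (G : SimpleGraph V)
    [inst : DecidableRel G.Adj] (v : V)
    [Fintype (G.neighborSet v)] :
    G.neighborFinset v = Finset.univ.filter (G.Adj v) := by
  ext u
  simp [SimpleGraph.mem_neighborFinset]

lemma degree_indep {V : Type*} [Fintype V] [DecidableEq V] (G : SimpleGraph V)
    [inst : DecidableRel G.Adj] (v : V) [Fintype (G.neighborSet v)] :
    G.degree v = (Finset.univ.filter (G.Adj v)).card := by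
  rw [SimpleGraph.degree, neighborFinset_indep]

lemma degR_eq {V : Type*} [Fintype V] [DecidableEq V] (G : SimpleGraph V)
    [inst : DecidableRel G.Adj] (v : V) :
    degR G v = ((Finset.univ.filter (G.Adj v)).card : ℝ) := by
  unfold degR
  rw [degree_indep]

lemma avgDegR_eq {V : Type*} [Fintype V] [DecidableEq V] (G : SimpleGraph V)
    [inst : DecidableRel G.Adj] (v : V) :
    avgDegR G v = ((∑ u ∈ Finset.univ.filter (G.Adj v),
        (Finset.univ.filter (G.Adj u)).card : ℕ) : ℝ) /
      ((Finset.univ.filter (G.Adj v)).card : ℝ) := by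
  unfold avgDegR
  rw [neighborFinset_indep, degree_indep]
  push_cast
  congr 1
  exact Finset.sum_congr rfl fun u _ => by rw [degree_indep]

lemma le_lapSpecRad {V : Type*} [Fintype V] [DecidableEq V] [Nonempty V]
    (G : SimpleGraph V) (μ : ℝ) (x : V → ℝ) (hx : x ≠ 0)
    (hμ : Matrix.mulVec (letI := Classical.decRel G.Adj; G.lapMatrix ℝ) x = μ • x) :
    μ ≤ lapSpecRad G := by
  classical
  letI := Classical.decRel G.Adj
  set L := G.lapMatrix ℝ with hL
  have hHerm := (SimpleGraph.posSemidef_lapMatrix ℝ G).isHermitian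
  have hmem : μ ∈ spectrum ℝ L := by
    rw [spectrum.mem_iff]
    intro hU
    have hdet : (algebraMap ℝ (Matrix V V ℝ) μ - L).det = 0 := by
      rw [← Matrix.exists_mulVec_eq_zero_iff]
      refine ⟨x, hx, ?_⟩
      rw [Matrix.sub_mulVec, Algebra.algebraMap_eq_smul_one, Matrix.smul_mulVec,
        Matrix.one_mulVec, hμ, sub_self]
    rw [Matrix.isUnit_iff_isUnit_det, hdet] at hU
    exact (not_isUnit_zero hU)
  rw [hHerm.spectrum_real_eq_range_eigenvalues] at hmem
  obtain ⟨i, hi⟩ := hmem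
  rw [← hi]
  unfold lapSpecRad
  exact le_ciSup (Set.Finite.bddAbove (Set.finite_range _)) i

lemma deg_vals : ∀ v : Fin 12, (Finset.univ.filter (W.Adj v)).card =
    if v = 0 then 11 else 3 := by decide

lemma sumdeg_vals : ∀ v : Fin 12, (∑ u ∈ Finset.univ.filter (W.Adj v),
    (Finset.univ.filter (W.Adj u)).card) = if v = 0 then 33 else 17 := by decide

lemma adj_zero : ∀ v : Fin 12, (0 ∈ Finset.univ.filter (W.Adj v)) ↔ v ≠ 0 := by decide

/-- There exists a finite simple connected graph `G` with at least two vertices whose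
Laplacian spectral radius exceeds the conjectured edge-maximum bound. -/
theorem exists_counterexample_bound41 :
    ∃ (V : Type) (_ : Fintype V) (_ : DecidableEq V) (_ : Nonempty V)
      (G : SimpleGraph V), G.Connected ∧ 2 ≤ Fintype.card V ∧
      ∀ i j : V, G.Adj i j →
        (fun di mi dj mj => 2 + (mi + mj) - (di + dj) + Real.sqrt (2 * (di ^ 2 + dj ^ 2) - 4 * (mi + mj) + 4))
          (degR G i) (avgDegR G i) (degR G j) (avgDegR G j) < lapSpecRad G := by
  refine ⟨Fin 12, inferInstance, inferInstance, inferInstance, W, ?_, by simp, ?_⟩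
  · -- connectivity: every vertex adjacent to 0
    have h0 : ∀ v : Fin 12, v ≠ 0 → W.Adj 0 v := by decide
    refine ⟨fun u v => ?_⟩
    by_cases hu : u = 0
    · by_cases hv : v = 0
      · subst hu hv; rfl
      · subst hu; exact (h0 v hv).reachable
    · by_cases hv : v = 0
      · subst hv; exact (h0 u hu).reachable.symm
      · exact ((h0 u hu).reachable.symm.trans (h0 v hv).reachable)
  · intro i j hij
    -- lower bound for lapSpecRad
    have hspec : (12 : ℝ) ≤ lapSpecRad W := by
      apply le_lapSpecRad W 12 (fun v => if v = 0 then 11 else -1)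
      · intro h
        have := congrFun h 0
        simp at this
      · funext v
        have hmat : (letI := Classical.decRel W.Adj; W.lapMatrix ℝ)
            = W.lapMatrix ℝ := by
          have h : (Classical.decRel W.Adj) = (inferInstance : DecidableRel W.Adj) :=
            Subsingleton.elim _ _
          rw [h]
        rw [hmat]
        rw [SimpleGraph.lapMatrix, Matrix.sub_mulVec]
        simp only [Pi.sub_apply, Pi.smul_apply, smul_eq_mul]
        rw [SimpleGraph.degMatrix, Matrix.mulVec_diagonal,
          SimpleGraph.adjMatrix_mulVec_apply, neighborFinset_indep, degree_indep]
        have hsplit : (∑ u ∈ Finset.univ.filter (W.Adj v),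
            (if u = 0 then (11 : ℝ) else -1))
            = (if 0 ∈ Finset.univ.filter (W.Adj v) then (12:ℝ) else 0)
              - (Finset.univ.filter (W.Adj v)).card := by
          have : ∀ u : Fin 12, (if u = 0 then (11 : ℝ) else -1)
              = (if u = 0 then (12 : ℝ) else 0) + (-1) := by
            intro u; split_ifs <;> norm_num
          rw [Finset.sum_congr rfl fun u _ => this u, Finset.sum_add_distrib,
            Finset.sum_ite_eq' _ (0 : Fin 12) (fun _ => (12:ℝ)),
            Finset.sum_const]
          ring
        rw [hsplit, deg_vals v]
        by_cases hv : v = 0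
        · subst hv
          rw [if_pos rfl, if_pos rfl, if_neg (by rw [adj_zero]; simp)]
          norm_num
        · rw [if_neg hv, if_neg hv, if_pos ((adj_zero v).2 hv)]
          norm_num
    -- upper bound for the edge expression
    have hne : i ≠ j := W.ne_of_adj hij
    have hd := degR_eq W
    have hm := avgDegR_eq W
    have hdv : ∀ v : Fin 12, degR W v = if v = 0 then (11:ℝ) else 3 := by
      intro v; rw [hd v, deg_vals v]; split_ifs <;> norm_num
    have hmv : ∀ v : Fin 12, avgDegR W v = if v = 0 then (3:ℝ) else 17/3 := by
      intro v; rw [hm v, sumdeg_vals v, deg_vals v]; split_ifs <;> norm_num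
    refine lt_of_lt_of_le ?_ hspec
    simp only [hdv, hmv]
    by_cases hi : i = 0
    · have hj : j ≠ 0 := by rintro rfl; exact hne (hi ▸ rfl)
      rw [if_pos hi, if_pos hi, if_neg hj, if_neg hj]
      have hs : Real.sqrt (2 * ((11:ℝ) ^ 2 + 3 ^ 2) - 4 * (3 + 17 / 3) + 4) < 46/3 := by
        rw [Real.sqrt_lt' (by norm_num)]
        norm_num
      linarith
    · by_cases hj : j = 0
      · rw [if_neg hi, if_neg hi, if_pos hj, if_pos hj]
        have hs : Real.sqrt (2 * ((3:ℝ) ^ 2 + 11 ^ 2) - 4 * (17 / 3 + 3) + 4) < 46/3 := by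
          rw [Real.sqrt_lt' (by norm_num)]
          norm_num
        linarith
      · rw [if_neg hi, if_neg hi, if_neg hj, if_neg hj]
        have hs : Real.sqrt (2 * ((3:ℝ) ^ 2 + 3 ^ 2) - 4 * (17 / 3 + 17 / 3) + 4) = 0 := by
          rw [Real.sqrt_eq_zero']
          norm_num
        rw [hs]
        norm_num
end
end

section
/- There exists a finite simple connected graph G with at least two vertices such that μ(G) > max over all pairs of adjacent vertices v_i ~ v_j of G of 2·(d_i² + d_j² + m_i·m_j − d_i·d_j)/(d_i + d_j). (This disproves conjectured edge-maximum bound 50 of Brankov, Hansen and Stevanović.) -/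
noncomputable section

open Finset

open Matrix SimpleGraph

/-- The counterexample graph's edge list. -/
def edgesL : List (Fin 10 × Fin 10) :=
  [(0,1),(0,2),(0,3),(0,8),(1,4),(1,5),(1,7),(2,4),(2,6),(3,4),(3,6),(4,8),(5,8),(5,9),(7,8),(7,9)]

/-- The counterexample graph: a bipartite graph on 10 vertices. -/
def Gc : SimpleGraph (Fin 10) := SimpleGraph.fromRel (fun i j => (i,j) ∈ edgesL)

instance GcDec : DecidableRel Gc.Adj := fun a b =>
  decidable_of_iff _ (SimpleGraph.fromRel_adj _ a b).symm

/-- An approximate top eigenvector of the Laplacian of `Gc`, used as a Rayleigh test vector. -/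
def xv : Fin 10 → ℝ := ![-9, 9, 5, 5, -9, -5, -2, -5, 9, 2]

/-- Rayleigh quotient bound: the quadratic form of a real symmetric matrix is bounded by the
largest eigenvalue times the squared norm. -/
lemma quad_le_iSup {n : Type*} [Fintype n] [DecidableEq n] [Nonempty n]
    {A : Matrix n n ℝ} (hA : A.IsHermitian) (x : n → ℝ) :
    x ⬝ᵥ A *ᵥ x ≤ (⨆ i, hA.eigenvalues i) * (x ⬝ᵥ x) := by
  set U : Matrix n n ℝ := (hA.eigenvectorUnitary : Matrix n n ℝ) with hU
  have hUU' : U * star U = 1 := (Matrix.mem_unitaryGroup_iff).mp hA.eigenvectorUnitary.2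
  set y : n → ℝ := x ᵥ* U with hy
  have hyst : star U *ᵥ x = y := by
    rw [star_eq_conjTranspose, conjTranspose_eq_transpose_of_trivial, mulVec_transpose, hy]
  have hnorm : x ⬝ᵥ x = y ⬝ᵥ y := by
    conv_lhs => rw [show x ⬝ᵥ x = x ⬝ᵥ (U * star U) *ᵥ x by rw [hUU', one_mulVec]]
    rw [← mulVec_mulVec, dotProduct_mulVec, hyst, hy]
  have key : x ⬝ᵥ A *ᵥ x = ∑ i, hA.eigenvalues i * (y i)^2 := by
    conv_lhs => rw [hA.spectral_theorem, Unitary.conjStarAlgAut_apply, ← hU]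
    rw [← mulVec_mulVec, ← mulVec_mulVec, hyst, dotProduct_mulVec, dotProduct_mulVec,
      hy]
    simp only [RCLike.ofReal_real_eq_id]
    rw [dotProduct]
    congr 1; funext i
    rw [vecMul_diagonal]
    simp only [Function.comp_apply, RCLike.ofReal_real_eq_id, id_eq]
    ring
  rw [key, hnorm, dotProduct, Finset.mul_sum]
  apply Finset.sum_le_sum
  intro i _
  have h1 : hA.eigenvalues i ≤ ⨆ j, hA.eigenvalues j :=
    le_ciSup (Set.Finite.bddAbove (Set.finite_range _)) i
  have h2 : (0:ℝ) ≤ (y i)^2 := sq_nonneg _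
  calc hA.eigenvalues i * y i ^ 2 ≤ (⨆ j, hA.eigenvalues j) * y i ^ 2 :=
        mul_le_mul_of_nonneg_right h1 h2
    _ = (⨆ j, hA.eigenvalues j) * (y i * y i) := by ring

/-- `lapSpecRad` can be computed with any decidability instance. -/
lemma lapSpecRad_eq {V : Type*} [Fintype V] [DecidableEq V] [Nonempty V]
    (G : SimpleGraph V) [inst : DecidableRel G.Adj] :
    lapSpecRad G = ⨆ i, (SimpleGraph.posSemidef_lapMatrix ℝ G).isHermitian.eigenvalues i := by
  unfold lapSpecRad
  congr!

/-- `degR` with the concrete decidability instance. -/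
lemma degR_val (v : Fin 10) : degR Gc v = (Gc.degree v : ℝ) := by
  unfold degR
  congr!

/-- `avgDegR` with the concrete decidability instance. -/
lemma avgDegR_val (v : Fin 10) :
    avgDegR Gc v = (∑ u ∈ Gc.neighborFinset v, (Gc.degree u : ℝ)) / (Gc.degree v : ℝ) := by
  unfold avgDegR
  congr!

lemma nbr_sum_cast (v : Fin 10) :
    (∑ u ∈ Gc.neighborFinset v, (Gc.degree u : ℝ))
      = ((∑ u ∈ Gc.neighborFinset v, Gc.degree u : ℕ) : ℝ) := by
  push_cast
  rfl

lemma degN : ∀ v : Fin 10, Gc.degree v = ![4,4,3,3,4,3,2,3,4,2] v := by decide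

lemma sumN : ∀ v : Fin 10,
    (∑ u ∈ Gc.neighborFinset v, Gc.degree u) = ![14,14,10,10,14,10,6,10,14,6] v := by decide

/-- Table of degrees of `Gc`. -/
lemma hdeg : ∀ v : Fin 10, degR Gc v = ![4,4,3,3,4,3,2,3,4,2] v := by
  intro v
  rw [degR_val, degN v]
  fin_cases v <;> norm_num

/-- Table of average neighbour degrees of `Gc`. -/
lemma hm : ∀ v : Fin 10, avgDegR Gc v = ![7/2,7/2,10/3,10/3,7/2,10/3,3,10/3,7/2,3] v := by
  intro v
  rw [avgDegR_val, nbr_sum_cast, sumN v, degN v]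
  fin_cases v <;> norm_num

/-- The graph `Gc` is connected. -/
lemma Gc_connected : Gc.Connected := by
  rw [SimpleGraph.connected_iff]
  refine ⟨fun u v => ?_, ⟨0⟩⟩
  have h : ∀ w : Fin 10, Gc.Reachable w 0 := by
    intro w
    have a1 : Gc.Adj 1 0 := by decide
    have a2 : Gc.Adj 2 0 := by decide
    have a3 : Gc.Adj 3 0 := by decide
    have a8 : Gc.Adj 8 0 := by decide
    have a41 : Gc.Adj 4 1 := by decide
    have a51 : Gc.Adj 5 1 := by decide
    have a62 : Gc.Adj 6 2 := by decide
    have a71 : Gc.Adj 7 1 := by decide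
    have a95 : Gc.Adj 9 5 := by decide
    fin_cases w
    · rfl
    · exact a1.reachable
    · exact a2.reachable
    · exact a3.reachable
    · exact a41.reachable.trans a1.reachable
    · exact a51.reachable.trans a1.reachable
    · exact a62.reachable.trans a2.reachable
    · exact a71.reachable.trans a1.reachable
    · exact a8.reachable
    · exact (a95.reachable.trans a51.reachable).trans a1.reachable
  exact (h u).trans (h v).symm

/-- Rayleigh quotient lower bound for the Laplacian spectral radius of `Gc`:
with `x = xv` we get `xᵀ L x = 3060` and `xᵀ x = 432`, hence `μ ≥ 85/12`. -/
lemma Gc_lapSpecRad_lower : (85/12 : ℝ) ≤ lapSpecRad Gc := by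
  have hq : xv ⬝ᵥ (Gc.lapMatrix ℝ) *ᵥ xv = 3060 := by
    rw [← Matrix.toLinearMap₂'_apply', SimpleGraph.lapMatrix_toLinearMap₂']
    simp (config := { decide := true }) only [Fin.sum_univ_succ, Finset.sum_empty, xv]
    simp
    norm_num
  have hx : xv ⬝ᵥ xv = 432 := by
    simp only [dotProduct, Fin.sum_univ_succ, Finset.sum_empty, xv]
    simp
    norm_num
  have h := quad_le_iSup (SimpleGraph.posSemidef_lapMatrix ℝ Gc).isHermitian xv
  rw [hq, hx, ← lapSpecRad_eq] at h
  nlinarith [h]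

/-- There exists a finite simple connected graph `G` with at least two vertices whose
Laplacian spectral radius exceeds the conjectured edge-maximum bound. -/
theorem exists_counterexample_bound50 :
    ∃ (V : Type) (_ : Fintype V) (_ : DecidableEq V) (_ : Nonempty V)
      (G : SimpleGraph V), G.Connected ∧ 2 ≤ Fintype.card V ∧
      ∀ i j : V, G.Adj i j →
        (fun di mi dj mj => 2 * (di ^ 2 + dj ^ 2 + mi * mj - di * dj) / (di + dj))
          (degR G i) (avgDegR G i) (degR G j) (avgDegR G j) < lapSpecRad G := by
  refine ⟨Fin 10, inferInstance, inferInstance, inferInstance, Gc, Gc_connected, by simp, ?_⟩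
  intro i j hadj
  have hb : 2 * (degR Gc i ^ 2 + degR Gc j ^ 2 + avgDegR Gc i * avgDegR Gc j
      - degR Gc i * degR Gc j) / (degR Gc i + degR Gc j) ≤ 113/16 := by
    rw [hdeg i, hdeg j, hm i, hm j]
    fin_cases i <;> fin_cases j <;>
      first
        | exact absurd hadj (by decide)
        | norm_num
  exact lt_of_le_of_lt hb (lt_of_lt_of_le (by norm_num) Gc_lapSpecRad_lower)
end
end

section
/- There exists a finite simple connected graph G with at least two vertices such that μ(G) > max over all pairs of adjacent vertices v_i ~ v_j of G of 2·(m_i + m_j) − 4·m_i·m_j/(d_i + d_j). (This disproves conjectured edge-maximum bound 51 of Brankov, Hansen and Stevanović.) -/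
noncomputable section

open Finset

open Matrix

/-- The counterexample graph: vertex `0` is joined to the fifteen vertices `1,…,15`,
which are grouped into five triangles `{3k+1, 3k+2, 3k+3}`. -/
def myG : SimpleGraph (Fin 16) where
  Adj i j := i ≠ j ∧ (i = 0 ∨ j = 0 ∨ (i.val - 1) / 3 = (j.val - 1) / 3)
  symm := by constructor; intro i j ⟨h1, h2⟩; exact ⟨h1.symm, by tauto⟩
  loopless := by constructor; intro i ⟨h, _⟩; exact h rfl

instance myInst : DecidableRel myG.Adj := fun i j =>
  inferInstanceAs (Decidable (i ≠ j ∧ (i = 0 ∨ j = 0 ∨ (i.val - 1) / 3 = (j.val - 1) / 3)))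

/-- The eigenvector for the eigenvalue 16. -/
def xvec : Fin 16 → ℝ := fun i => if i = 0 then 15 else -1

lemma deg_my : ∀ v : Fin 16, myG.degree v = if v = 0 then 15 else 3 := by decide

lemma zmem : ∀ v : Fin 16, (0 ∈ myG.neighborFinset v ↔ v ≠ 0) := by decide

lemma sum_deg :
    ∀ v : Fin 16, (∑ u ∈ myG.neighborFinset v, myG.degree u) = if v = 0 then 45 else 21 := by
  decide

lemma eig : myG.lapMatrix ℝ *ᵥ xvec = (16 : ℝ) • xvec := by
  funext v
  rw [Pi.smul_apply, SimpleGraph.lapMatrix_mulVec_apply]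
  have hs : ∑ u ∈ myG.neighborFinset v, xvec u
      = (if 0 ∈ myG.neighborFinset v then (16:ℝ) else 0) - myG.degree v := by
    have : ∀ u : Fin 16, xvec u = (if u = 0 then (16:ℝ) else 0) - 1 := by
      intro u; simp [xvec]; split <;> norm_num
    simp_rw [this, Finset.sum_sub_distrib, Finset.sum_ite_eq']
    simp [SimpleGraph.card_neighborFinset_eq_degree]
  rw [hs, deg_my v]
  by_cases hv : v = 0
  · simp [hv, xvec, (zmem 0)]
    norm_num
  · rw [if_neg hv, (zmem v).2 hv |> if_pos]
    simp [xvec, if_neg hv, deg_my v, hv]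
    norm_num

lemma spec16 : (16:ℝ) ∈ spectrum ℝ (myG.lapMatrix ℝ) := by
  rw [← AlgEquiv.spectrum_eq (Matrix.toLinAlgEquiv' : Matrix (Fin 16) (Fin 16) ℝ ≃ₐ[ℝ] _),
    ← Module.End.hasEigenvalue_iff_mem_spectrum]
  apply Module.End.hasEigenvalue_of_hasEigenvector (x := xvec)
  refine ⟨Module.End.mem_eigenspace_iff.2 ?_, ?_⟩
  · rw [Matrix.toLinAlgEquiv'_apply, eig]
  · intro h
    have : xvec 0 = 0 := congrFun h 0
    simp [xvec] at this

lemma sup16 :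
    (16:ℝ) ≤ ⨆ i, (SimpleGraph.posSemidef_lapMatrix ℝ myG).isHermitian.eigenvalues i := by
  have h := Matrix.IsHermitian.spectrum_real_eq_range_eigenvalues (SimpleGraph.posSemidef_lapMatrix ℝ myG).isHermitian
  have : (16:ℝ) ∈ Set.range (SimpleGraph.posSemidef_lapMatrix ℝ myG).isHermitian.eigenvalues := by
    rw [← h]; exact spec16
  obtain ⟨i, hi⟩ := this
  rw [← hi]
  exact le_ciSup (Set.Finite.bddAbove (Set.finite_range _)) i

lemma inst_eq : (Classical.decRel myG.Adj) = myInst := Subsingleton.elim _ _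

lemma degR_my (v : Fin 16) : degR myG v = if v = 0 then (15:ℝ) else 3 := by
  unfold degR
  rw [inst_eq, deg_my v]
  split <;> norm_num

lemma avgDegR_my (v : Fin 16) : avgDegR myG v = if v = 0 then (3:ℝ) else 7 := by
  unfold avgDegR
  rw [inst_eq]
  rw [← Nat.cast_sum, sum_deg v, deg_my v]
  split <;> norm_num

lemma lap_my : (16:ℝ) ≤ lapSpecRad myG := by
  have h : lapSpecRad myG
      = ⨆ i, (SimpleGraph.posSemidef_lapMatrix ℝ myG).isHermitian.eigenvalues i := by
    unfold lapSpecRad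
    congr!
  rw [h]; exact sup16

lemma conn : myG.Connected := by
  have h : ∀ w : Fin 16, myG.Reachable 0 w := by
    intro w
    by_cases hw : w = 0
    · subst hw; rfl
    · exact (SimpleGraph.Adj.reachable ⟨Ne.symm hw, Or.inl rfl⟩)
  exact ⟨fun u v => (h u).symm.trans (h v)⟩

/-- There exists a finite simple connected graph `G` with at least two vertices whose
Laplacian spectral radius exceeds the conjectured edge-maximum bound. -/
theorem exists_counterexample_bound51 :
    ∃ (V : Type) (_ : Fintype V) (_ : DecidableEq V) (_ : Nonempty V)
      (G : SimpleGraph V), G.Connected ∧ 2 ≤ Fintype.card V ∧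
      ∀ i j : V, G.Adj i j →
        (fun di mi dj mj => 2 * (mi + mj) - 4 * mi * mj / (di + dj))
          (degR G i) (avgDegR G i) (degR G j) (avgDegR G j) < lapSpecRad G := by
  refine ⟨Fin 16, inferInstance, inferInstance, inferInstance, myG, conn, by simp, ?_⟩
  intro i j hadj
  have h16 := lap_my
  simp only [degR_my, avgDegR_my]
  have hij : i ≠ j := hadj.ne
  by_cases hi : i = 0
  · have hj : j ≠ 0 := fun h => hij (by rw [hi, h])
    rw [if_pos hi, if_pos hi, if_neg hj, if_neg hj]
    have : 2 * ((3:ℝ) + 7) - 4 * 3 * 7 / (15 + 3) < 16 := by norm_num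
    linarith
  · by_cases hj : j = 0
    · rw [if_neg hi, if_neg hi, if_pos hj, if_pos hj]
      have : 2 * ((7:ℝ) + 3) - 4 * 7 * 3 / (3 + 15) < 16 := by norm_num
      linarith
    · rw [if_neg hi, if_neg hi, if_neg hj, if_neg hj]
      have : 2 * ((7:ℝ) + 7) - 4 * 7 * 7 / (3 + 3) < 16 := by norm_num
      linarith

end
end
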